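/- For n ≥ 1, the antisymmetrization identity ASym_{X_1,...,X_n}[ ∏_{i=1}^n X_i^{i-1} (1 - ∏_{j=i}^n X_j)^{-1} ] = ∏_{i=1}^n (1 - X_i)^{-1} · ∏_{1≤i<j≤n} (X_j - X_i)/(1 - X_i X_j) holds as an identity of rational functions. -/

import Mathlib

open Finset Polynomial
set_option maxRecDepth 8000

namespace LW

variable {F : Type*} [Field F]

noncomputable def lhsSum (m : ℕ) (x : Fin m → F) : F :=
  ∑ σ : Equiv.Perm (Fin m), ((Equiv.Perm.sign σ : ℤ) : F) *
    ∏ i : Fin m, (x (σ i)) ^ (i : ℕ) * (1 - ∏ j ∈ Finset.Ici i, x (σ j))⁻¹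

noncomputable def rhsProd (m : ℕ) (x : Fin m → F) : F :=
  (∏ i : Fin m, (1 - x i)⁻¹) *
    ∏ i : Fin m, ∏ j ∈ Finset.Ioi i, (x j - x i) / (1 - x i * x j)

/-- the permutation sending `0 ↦ p`, `i.succ ↦ p.succAbove (e i)`. -/
def phi {m : ℕ} (p : Fin (m + 1)) (e : Equiv.Perm (Fin m)) : Equiv.Perm (Fin (m + 1)) :=
  (Equiv.Perm.decomposeFin.symm (0, e)).trans p.cycleRange.symm

lemma phi_zero {m : ℕ} (p : Fin (m + 1)) (e : Equiv.Perm (Fin m)) : phi p e 0 = p := by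
  simp [phi, Equiv.Perm.decomposeFin_symm_apply_zero, Fin.cycleRange_symm_zero]

lemma phi_succ {m : ℕ} (p : Fin (m + 1)) (e : Equiv.Perm (Fin m)) (i : Fin m) :
    phi p e i.succ = p.succAbove (e i) := by
  simp [phi, Equiv.Perm.decomposeFin_symm_apply_succ, Fin.cycleRange_symm_succ]

lemma phi_sign {m : ℕ} (p : Fin (m + 1)) (e : Equiv.Perm (Fin m)) :
    Equiv.Perm.sign (phi p e) = (-1) ^ (p : ℕ) * Equiv.Perm.sign e := by
  have : phi p e = p.cycleRange.symm * (Equiv.Perm.decomposeFin.symm (0, e)) := rfl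
  rw [this, map_mul, Equiv.Perm.decomposeFin.symm_sign, if_pos rfl,
    Equiv.Perm.sign_symm, Fin.sign_cycleRange, one_mul]

lemma phi_bijective {m : ℕ} :
    Function.Bijective (fun pe : Fin (m + 1) × Equiv.Perm (Fin m) => phi pe.1 pe.2) := by
  rw [Fintype.bijective_iff_injective_and_card]
  constructor
  · rintro ⟨p, e⟩ ⟨p', e'⟩ h
    simp only at h
    have hp : p = p' := by rw [← phi_zero p e, ← phi_zero p' e', h]
    subst hp
    have he : e = e' := Equiv.ext fun i => by
      have := congrArg (fun σ : Equiv.Perm (Fin (m+1)) => σ i.succ) h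
      simp only [phi_succ] at this
      exact Fin.succAbove_right_injective this
    rw [he]
  · simp [Fintype.card_perm, Fintype.card_fin, Nat.factorial_succ]

lemma sum_phi {m : ℕ} (G : Equiv.Perm (Fin (m + 1)) → F) :
    ∑ σ : Equiv.Perm (Fin (m + 1)), G σ =
      ∑ p : Fin (m + 1), ∑ e : Equiv.Perm (Fin m), G (phi p e) := by
  calc ∑ σ : Equiv.Perm (Fin (m + 1)), G σ
      = ∑ pe : Fin (m + 1) × Equiv.Perm (Fin m), G (phi pe.1 pe.2) :=
        (Fintype.sum_bijective _ phi_bijective _ _ (fun pe => rfl)).symm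
    _ = _ := Fintype.sum_prod_type _

lemma Ici_zero_fin (m : ℕ) : Finset.Ici (0 : Fin (m + 1)) = Finset.univ := by
  ext j; simp [Fin.zero_le]

lemma Ici_succ_fin {m : ℕ} (i : Fin m) :
    Finset.Ici i.succ = (Finset.Ici i).map ⟨Fin.succ, Fin.succ_injective m⟩ := by
  ext j
  cases j using Fin.cases with
  | zero => simp [Fin.le_zero_iff, Fin.succ_ne_zero]
  | succ j =>
    simp only [Finset.mem_Ici, Finset.mem_map, Function.Embedding.coeFn_mk,
      Fin.succ_inj, Fin.succ_le_succ_iff]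
    constructor
    · exact fun h => ⟨j, h, rfl⟩
    · rintro ⟨k, hk, rfl⟩; exact hk

lemma Ioi_succAbove {m : ℕ} (p : Fin (m + 1)) (i : Fin m) :
    Finset.Ioi (p.succAbove i) =
      (if p.succAbove i < p then {p} else ∅) ∪ (Finset.Ioi i).map (p.succAboveEmb) := by
  ext j
  simp only [Finset.mem_Ioi, Finset.mem_union, Finset.mem_map, Fin.coe_succAboveEmb,
    Finset.mem_singleton]
  constructor
  · intro hj
    by_cases hjp : j = p
    · subst hjp
      simp [hj]
    · obtain ⟨k, rfl⟩ := Fin.exists_succAbove_eq hjp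
      right
      exact ⟨k, Fin.succAbove_lt_succAbove_iff.mp hj, rfl⟩
  · intro h
    rcases h with h | ⟨k, hk, rfl⟩
    · split at h
      · next hlt => simp only [Finset.mem_singleton] at h; subst h; exact hlt
      · simp at h
    · exact Fin.succAbove_lt_succAbove_iff.mpr hk

lemma map_filter_castSucc {m : ℕ} (p : Fin (m + 1)) :
    (Finset.univ.filter (fun i : Fin m => p.succAbove i < p)).map (Fin.castSuccEmb) =
      Finset.Iio p := by
  ext j
  rw [Finset.mem_map]
  simp only [Finset.mem_filter, Finset.mem_univ, true_and, Finset.mem_Iio]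
  constructor
  · rintro ⟨k, hk, rfl⟩
    rwa [Fin.succAbove_lt_iff_castSucc_lt] at hk
  · intro hj
    have hjm : (j : ℕ) < m := lt_of_lt_of_le hj (Nat.lt_succ_iff.mp p.isLt)
    refine ⟨⟨j, hjm⟩, ?_, rfl⟩
    rw [Fin.succAbove_lt_iff_castSucc_lt, Fin.lt_def, Fin.coe_castSucc]
    exact hj

lemma erase_eq_Iio_union_Ioi {m : ℕ} (p : Fin (m + 1)) :
    Finset.univ.erase p = Finset.Iio p ∪ Finset.Ioi p := by
  ext j
  simp only [Finset.mem_erase, Finset.mem_univ, and_true, Finset.mem_union, Finset.mem_Iio,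
    Finset.mem_Ioi]
  exact ne_iff_lt_or_gt


lemma pair_split {m : ℕ} (p : Fin (m + 1)) (g : Fin (m + 1) → Fin (m + 1) → F) :
    (∏ i : Fin (m + 1), ∏ j ∈ Finset.Ioi i, g i j) =
      ((∏ i ∈ Finset.Iio p, g i p) * ∏ j ∈ Finset.Ioi p, g p j) *
        ∏ i : Fin m, ∏ j ∈ Finset.Ioi i, g (p.succAbove i) (p.succAbove j) := by
  rw [Fin.prod_univ_succAbove (fun i => ∏ j ∈ Finset.Ioi i, g i j) p]
  have inner : ∀ i : Fin m, (∏ j ∈ Finset.Ioi (p.succAbove i), g (p.succAbove i) j) =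
      (if p.succAbove i < p then g (p.succAbove i) p else 1) *
        ∏ j ∈ Finset.Ioi i, g (p.succAbove i) (p.succAbove j) := by
    intro i
    rw [Ioi_succAbove p i, Finset.prod_union, Finset.prod_map]
    · congr 1
      · split
        · rw [Finset.prod_singleton]
        · rw [Finset.prod_empty]
    · split
      · rw [Finset.disjoint_singleton_left]
        simp only [Finset.mem_map, not_exists, not_and]
        intro k _ hk
        exact Fin.succAbove_ne p k hk
      · exact Finset.disjoint_empty_left _
  rw [Finset.prod_congr rfl (fun i _ => inner i), Finset.prod_mul_distrib]
  have h1 : (∏ i : Fin m, if p.succAbove i < p then g (p.succAbove i) p else 1) =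
      ∏ i ∈ Finset.Iio p, g i p := by
    rw [← Finset.prod_filter]
    rw [← map_filter_castSucc p, Finset.prod_map]
    refine Finset.prod_congr rfl (fun i hi => ?_)
    rw [Finset.mem_filter] at hi
    rw [Fin.coe_castSuccEmb, Fin.succAbove_of_castSucc_lt p i
      ((Fin.succAbove_lt_iff_castSucc_lt p i).mp hi.2)]
  rw [h1]
  ring


lemma key {m : ℕ} (x : Fin m → F) (h0 : ∀ i, x i ≠ 0)
    (hp1 : ∀ i, 1 + x i ≠ 0) (hd : ∀ i j, i ≠ j → x i ≠ x j) :
    ∑ k : Fin m, (1 - x k) * (∏ j ∈ Finset.univ.erase k, x j) *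
        ∏ j ∈ Finset.univ.erase k, ((1 - x j * x k) / (x j - x k)) =
      1 - ∏ j : Fin m, x j := by
  rcases Nat.eq_zero_or_pos m with hm | hm
  · subst hm; simp
  have hxinj : Function.Injective x := fun a b h => by
    by_contra hne; exact hd a b hne h
  set E : F := ∏ j : Fin m, x j with hE
  have hDk : ∀ k : Fin m, (∏ j ∈ Finset.univ.erase k, (x j - x k)) ≠ 0 := by
    intro k
    rw [Finset.prod_ne_zero_iff]
    intro j hj
    exact sub_ne_zero_of_ne (hd j k (Finset.mem_erase.mp hj).1)
  set A : Fin m → F := fun k =>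
    (∏ j : Fin m, (1 - x j * x k)) / (∏ j ∈ Finset.univ.erase k, (x j - x k)) with hA
  set P : F[X] := ∏ j : Fin m, (1 - C (x j) * X) with hP
  set Q : F[X] := ∏ j : Fin m, (C (x j) - X) with hQ
  set Qk : Fin m → F[X] := fun k => ∏ j ∈ Finset.univ.erase k, (C (x j) - X) with hQk
  have hPeval : ∀ y : F, P.eval y = ∏ j : Fin m, (1 - x j * y) := by
    intro y; simp [hP, Polynomial.eval_prod]
  have hQeval : ∀ y : F, Q.eval y = ∏ j : Fin m, (x j - y) := by
    intro y; simp [hQ, Polynomial.eval_prod]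
  have hQkeval : ∀ (k : Fin m) (y : F), (Qk k).eval y = ∏ j ∈ Finset.univ.erase k, (x j - y) := by
    intro k y; simp [hQk, Polynomial.eval_prod]
  have flip : ∀ s : Finset (Fin m),
      (∏ j ∈ s, (C (x j) - X)) = C ((-1 : F) ^ s.card) * ∏ j ∈ s, (X - C (x j)) := by
    intro s
    calc (∏ j ∈ s, (C (x j) - X)) = ∏ j ∈ s, ((-1 : F[X]) * (X - C (x j))) :=
          Finset.prod_congr rfl (fun j _ => by ring)
      _ = (∏ _j ∈ s, (-1 : F[X])) * ∏ j ∈ s, (X - C (x j)) := Finset.prod_mul_distrib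
      _ = C ((-1 : F) ^ s.card) * ∏ j ∈ s, (X - C (x j)) := by
          rw [Finset.prod_const, map_pow, map_neg, map_one]
  set R1 : F[X] := ∏ j : Fin m, (X - C (x j)⁻¹) with hR1
  set R2 : F[X] := ∏ j : Fin m, (X - C (x j)) with hR2
  have hPmonic : P = C ((-1 : F) ^ m * E) * R1 := by
    rw [hP]
    calc (∏ j : Fin m, (1 - C (x j) * X))
        = ∏ j : Fin m, ((-C (x j)) * (X - C (x j)⁻¹)) := by
          refine Finset.prod_congr rfl (fun j _ => ?_)
          rw [mul_sub, neg_mul, neg_mul, ← C_mul, mul_inv_cancel₀ (h0 j), map_one]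
          ring
      _ = (∏ j : Fin m, (-C (x j))) * R1 := Finset.prod_mul_distrib
      _ = _ := by
          congr 1
          calc (∏ j : Fin m, (-C (x j))) = ∏ j : Fin m, ((-1 : F[X]) * C (x j)) :=
                Finset.prod_congr rfl fun j _ => by ring
            _ = (∏ _j : Fin m, (-1 : F[X])) * ∏ j : Fin m, C (x j) := Finset.prod_mul_distrib
            _ = C ((-1 : F) ^ m * E) := by
                rw [Finset.prod_const, ← map_prod, Finset.card_univ, Fintype.card_fin,
                  map_mul, map_pow, map_neg, map_one]
  have hQmonic : Q = C ((-1 : F) ^ m) * R2 := by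
    rw [hQ, flip Finset.univ, Finset.card_univ, Fintype.card_fin]
  -- monicity and degrees
  have hR1monic : R1.Monic := monic_prod_of_monic _ _ fun j _ => monic_X_sub_C _
  have hR2monic : R2.Monic := monic_prod_of_monic _ _ fun j _ => monic_X_sub_C _
  have hR1deg : R1.natDegree = m := by
    rw [hR1, natDegree_prod _ _ (fun j _ => X_sub_C_ne_zero _)]
    simp [natDegree_X_sub_C]
  have hR2deg : R2.natDegree = m := by
    rw [hR2, natDegree_prod _ _ (fun j _ => X_sub_C_ne_zero _)]
    simp [natDegree_X_sub_C]
  have hsubdeg : (R1 - R2).natDegree < m := by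
    rcases eq_or_ne R1 R2 with h | h
    · simp [h, hm]
    have hdeglt : (R1 - R2).degree < R1.degree := by
      apply Polynomial.degree_sub_lt
      · rw [degree_eq_natDegree hR1monic.ne_zero, degree_eq_natDegree hR2monic.ne_zero,
          hR1deg, hR2deg]
      · exact hR1monic.ne_zero
      · rw [hR1monic.leadingCoeff, hR2monic.leadingCoeff]
    rw [degree_eq_natDegree hR1monic.ne_zero, hR1deg] at hdeglt
    exact (Polynomial.natDegree_lt_iff_degree_lt (sub_ne_zero_of_ne h)).mpr hdeglt
  have hCC : C E * C ((-1 : F) ^ m) = C ((-1 : F) ^ m * E) := by rw [← map_mul, mul_comm]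
  have hQkdeg : ∀ k : Fin m, (Qk k).natDegree ≤ m - 1 := by
    intro k
    have hcard : (Finset.univ.erase k).card = m - 1 := by
      rw [Finset.card_erase_of_mem (Finset.mem_univ k), Finset.card_univ, Fintype.card_fin]
    rw [hQk]
    refine le_trans (Polynomial.natDegree_prod_le _ _) ?_
    rw [← hcard]
    refine le_trans (Finset.sum_le_card_nsmul _ _ 1 (fun j _ => ?_)) (by simp)
    exact le_trans (Polynomial.natDegree_sub_le _ _) (by simp)
  have hD : P - (C E * Q + ∑ k : Fin m, C (A k) * Qk k) = 0 := by
    apply Polynomial.eq_zero_of_natDegree_lt_card_of_eval_eq_zero _ hxinj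
    · intro i
      rw [Polynomial.eval_sub, Polynomial.eval_add, Polynomial.eval_mul, Polynomial.eval_C,
        Polynomial.eval_finset_sum]
      simp only [Polynomial.eval_mul, Polynomial.eval_C]
      rw [hPeval, hQeval]
      have hQ0 : (∏ j : Fin m, (x j - x i)) = 0 :=
        Finset.prod_eq_zero (Finset.mem_univ i) (by simp)
      have hsum : (∑ k : Fin m, A k * (Qk k).eval (x i)) = A i * (Qk i).eval (x i) := by
        refine Finset.sum_eq_single i (fun k _ hk => ?_) (by simp)
        rw [hQkeval]
        rw [Finset.prod_eq_zero (Finset.mem_erase.mpr ⟨(Ne.symm hk), Finset.mem_univ i⟩)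
          (by simp), mul_zero]
      rw [hsum, hQkeval, hA]
      rw [div_mul_cancel₀ _ (hDk i)]
      rw [hQ0]
      ring
    · have hrw : P - (C E * Q + ∑ k : Fin m, C (A k) * Qk k) =
          C ((-1 : F) ^ m * E) * (R1 - R2) - ∑ k : Fin m, C (A k) * Qk k := by
        rw [hPmonic, hQmonic, ← mul_assoc, hCC]
        ring
      rw [hrw, Fintype.card_fin]
      refine lt_of_le_of_lt (Polynomial.natDegree_sub_le _ _) ?_
      rw [max_lt_iff]
      constructor
      · exact lt_of_le_of_lt (Polynomial.natDegree_C_mul_le _ _) hsubdeg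
      · refine lt_of_le_of_lt (Polynomial.natDegree_sum_le_of_forall_le _ _ (fun k _ => ?_))
          (Nat.sub_lt hm Nat.one_pos)
        exact le_trans (Polynomial.natDegree_C_mul_le _ _) (hQkdeg k)
  have hpoly : P = C E * Q + ∑ k : Fin m, C (A k) * Qk k := sub_eq_zero.mp hD
  -- evaluation at 0
  have hzero : (1 : F) = E * E + ∑ k : Fin m, A k * ∏ j ∈ Finset.univ.erase k, x j := by
    have h := congrArg (Polynomial.eval 0) hpoly
    rw [Polynomial.eval_add, Polynomial.eval_mul, Polynomial.eval_C,
      Polynomial.eval_finset_sum] at h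
    simp only [Polynomial.eval_mul, Polynomial.eval_C] at h
    rw [hPeval, hQeval] at h
    simp only [hQkeval] at h
    simpa using h
  -- evaluation at -1
  set W : F := ∏ j : Fin m, (1 + x j) with hWdef
  have hW : W ≠ 0 := Finset.prod_ne_zero_iff.mpr (fun j _ => hp1 j)
  have hmone : W = E * W + ∑ k : Fin m, A k * ∏ j ∈ Finset.univ.erase k, (1 + x j) := by
    have h := congrArg (Polynomial.eval (-1 : F)) hpoly
    rw [Polynomial.eval_add, Polynomial.eval_mul, Polynomial.eval_C,
      Polynomial.eval_finset_sum] at h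
    simp only [Polynomial.eval_mul, Polynomial.eval_C] at h
    rw [hPeval, hQeval] at h
    simp only [hQkeval] at h
    rw [hWdef]
    have e1 : (∏ j : Fin m, (x j - -1)) = ∏ j : Fin m, (1 + x j) :=
      Finset.prod_congr rfl fun j _ => by ring
    have e2 : ∀ k : Fin m, (∏ j ∈ Finset.univ.erase k, (x j - -1)) =
        ∏ j ∈ Finset.univ.erase k, (1 + x j) := fun k =>
      Finset.prod_congr rfl fun j _ => by ring
    have e3 : (∏ j : Fin m, (1 - x j * -1)) = ∏ j : Fin m, (1 + x j) :=
      Finset.prod_congr rfl fun j _ => by ring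
    rw [e1, e3] at h
    simp only [e2] at h
    exact h
  -- final algebra
  have hstep : ∀ k : Fin m,
      (1 - x k) * (∏ j ∈ Finset.univ.erase k, x j) *
          ∏ j ∈ Finset.univ.erase k, ((1 - x j * x k) / (x j - x k)) =
        A k * (∏ j ∈ Finset.univ.erase k, x j)
          - E * ((A k * ∏ j ∈ Finset.univ.erase k, (1 + x j)) / W) := by
    intro k
    have hxE : x k * ∏ j ∈ Finset.univ.erase k, x j = E :=
      Finset.mul_prod_erase Finset.univ x (Finset.mem_univ k)
    have hWk : (1 + x k) * ∏ j ∈ Finset.univ.erase k, (1 + x j) = W :=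
      Finset.mul_prod_erase Finset.univ (fun j => 1 + x j) (Finset.mem_univ k)
    have hWk' : (∏ j ∈ Finset.univ.erase k, (1 + x j)) ≠ 0 :=
      Finset.prod_ne_zero_iff.mpr fun j _ => hp1 j
    have hPk : (∏ j : Fin m, (1 - x j * x k)) =
        (1 - x k * x k) * ∏ j ∈ Finset.univ.erase k, (1 - x j * x k) :=
      (Finset.mul_prod_erase Finset.univ _ (Finset.mem_univ k)).symm
    rw [Finset.prod_div_distrib, hA]
    simp only
    rw [hPk, ← hxE, ← hWk]
    field_simp [hDk k, hp1 k, hWk']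
    ring
  rw [Finset.sum_congr rfl (fun k _ => hstep k), Finset.sum_sub_distrib, ← Finset.mul_sum]
  have hsum2 : (∑ k : Fin m, (A k * ∏ j ∈ Finset.univ.erase k, (1 + x j)) / W) = 1 - E := by
    rw [← Finset.sum_div]
    have hx : (∑ k : Fin m, A k * ∏ j ∈ Finset.univ.erase k, (1 + x j)) = W - E * W := by
      linear_combination -hmone
    rw [hx]
    field_simp
  rw [hsum2]
  have hsum1 : (∑ k : Fin m, A k * ∏ j ∈ Finset.univ.erase k, x j) = 1 - E * E := by
    linear_combination -hzero
  rw [hsum1]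
  ring

theorem general : ∀ (m : ℕ) (x : Fin m → F), (∀ i, x i ≠ 0) → (∀ i j, i ≠ j → x i ≠ x j) →
    (∀ i, 1 - x i ≠ 0) → (∀ i, 1 + x i ≠ 0) → (∀ i j, 1 - x i * x j ≠ 0) →
    (∀ s : Finset (Fin m), s.Nonempty → 1 - ∏ j ∈ s, x j ≠ 0) →
    lhsSum m x = rhsProd m x := by
  intro m
  induction m with
  | zero =>
    intro x _ _ _ _ _ _
    simp [lhsSum, rhsProd]
  | succ m ih =>
    intro x h0 hd h1 hp1 h2 hs
    set E : F := ∏ i : Fin (m + 1), x i with hEdef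
    have hE : 1 - E ≠ 0 := hs Finset.univ Finset.univ_nonempty
    -- Step 1 : decompose the sum over permutations
    have step1 : lhsSum (m + 1) x = (1 - E)⁻¹ *
        ∑ p : Fin (m + 1), ((-1 : F) ^ (p : ℕ) *
          ((∏ i : Fin m, x (p.succAbove i)) * lhsSum m (fun i => x (p.succAbove i)))) := by
      rw [lhsSum, sum_phi, Finset.mul_sum]
      refine Finset.sum_congr rfl fun p _ => ?_
      rw [lhsSum, Finset.mul_sum, Finset.mul_sum, Finset.mul_sum]
      refine Finset.sum_congr rfl fun e _ => ?_
      have hsign : ((Equiv.Perm.sign (phi p e) : ℤ) : F) =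
          (-1 : F) ^ (p : ℕ) * ((Equiv.Perm.sign e : ℤ) : F) := by
        rw [phi_sign p e]
        push_cast
        ring
      have hprod : (∏ i : Fin (m + 1),
            x (phi p e i) ^ (i : ℕ) * (1 - ∏ j ∈ Finset.Ici i, x (phi p e j))⁻¹) =
          (1 - E)⁻¹ * ((∏ i : Fin m, x (p.succAbove i)) *
            ∏ i : Fin m, (x (p.succAbove (e i)) ^ (i : ℕ) *
              (1 - ∏ j ∈ Finset.Ici i, x (p.succAbove (e j)))⁻¹)) := by
        rw [Fin.prod_univ_succ]
        have hzero' : x (phi p e 0) ^ ((0 : Fin (m + 1)) : ℕ) *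
            (1 - ∏ j ∈ Finset.Ici (0 : Fin (m + 1)), x (phi p e j))⁻¹ = (1 - E)⁻¹ := by
          rw [Ici_zero_fin, Fin.val_zero, pow_zero, one_mul, hEdef, Equiv.prod_comp (phi p e) x]
        rw [hzero']
        congr 1
        have hsuccterm : ∀ i : Fin m,
            x (phi p e i.succ) ^ ((i.succ : Fin (m + 1)) : ℕ) *
              (1 - ∏ j ∈ Finset.Ici i.succ, x (phi p e j))⁻¹ =
            x (p.succAbove (e i)) * (x (p.succAbove (e i)) ^ (i : ℕ) *
              (1 - ∏ j ∈ Finset.Ici i, x (p.succAbove (e j)))⁻¹) := by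
          intro i
          have hIci : (∏ j ∈ Finset.Ici i.succ, x (phi p e j)) =
              ∏ j ∈ Finset.Ici i, x (p.succAbove (e j)) := by
            rw [Ici_succ_fin i, Finset.prod_map]
            exact Finset.prod_congr rfl fun j _ => by rw [Function.Embedding.coeFn_mk, phi_succ]
          rw [hIci, phi_succ, Fin.val_succ, pow_succ]
          ring
        rw [Finset.prod_congr rfl (fun i _ => hsuccterm i), Finset.prod_mul_distrib]
        congr 1
        exact Equiv.prod_comp e (fun i => x (p.succAbove i))
      rw [hsign, hprod]
      ring
    rw [step1]
    -- Step 2 : apply the induction hypothesis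
    have step2 : ∀ p : Fin (m + 1),
        lhsSum m (fun i => x (p.succAbove i)) = rhsProd m (fun i => x (p.succAbove i)) := by
      intro p
      refine ih _ (fun i => h0 _) (fun i j hij => hd _ _ ?_) (fun i => h1 _) (fun i => hp1 _)
        (fun i j => h2 _ _) (fun s hne => ?_)
      · intro hcontra
        exact hij (Fin.succAbove_right_injective hcontra)
      · have := hs (s.map (p.succAboveEmb)) hne.map
        rwa [Finset.prod_map] at this
    simp only [step2]
    -- Step 3 : the scalar identity
    have hc1 : ∀ p : Fin (m + 1), (∏ i ∈ Finset.Iio p, (x p - x i) / (1 - x i * x p)) ≠ 0 := by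
      intro p
      rw [Finset.prod_ne_zero_iff]
      intro i hi
      exact div_ne_zero (sub_ne_zero_of_ne (hd p i (ne_of_gt (Finset.mem_Iio.mp hi))))
        (h2 i p)
    have hc2 : ∀ p : Fin (m + 1), (∏ j ∈ Finset.Ioi p, (x j - x p) / (1 - x p * x j)) ≠ 0 := by
      intro p
      rw [Finset.prod_ne_zero_iff]
      intro j hj
      exact div_ne_zero (sub_ne_zero_of_ne (hd j p (ne_of_gt (Finset.mem_Ioi.mp hj))))
        (h2 p j)
    have hEp : ∀ p : Fin (m + 1), (∏ i : Fin m, x (p.succAbove i)) =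
        ∏ j ∈ Finset.univ.erase p, x j := by
      intro p
      apply mul_left_cancel₀ (h0 p)
      rw [Finset.mul_prod_erase _ x (Finset.mem_univ p), ← Fin.prod_univ_succAbove x p]
    have hPisub : ∀ p : Fin (m + 1), (∏ i : Fin m, (1 - x (p.succAbove i))⁻¹) =
        (1 - x p) * ∏ i : Fin (m + 1), (1 - x i)⁻¹ := by
      intro p
      rw [Fin.prod_univ_succAbove (fun i => (1 - x i)⁻¹) p, ← mul_assoc,
        mul_inv_cancel₀ (h1 p), one_mul]
    have hGp : ∀ p : Fin (m + 1), (∏ i : Fin m, ∏ j ∈ Finset.Ioi i,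
        (x (p.succAbove j) - x (p.succAbove i)) / (1 - x (p.succAbove i) * x (p.succAbove j))) =
        ((∏ i ∈ Finset.Iio p, (x p - x i) / (1 - x i * x p)) *
          ∏ j ∈ Finset.Ioi p, (x j - x p) / (1 - x p * x j))⁻¹ *
        ∏ i : Fin (m + 1), ∏ j ∈ Finset.Ioi i, (x j - x i) / (1 - x i * x j) := by
      intro p
      rw [pair_split p (fun a b => (x b - x a) / (1 - x a * x b)), ← mul_assoc,
        inv_mul_cancel₀ (mul_ne_zero (hc1 p) (hc2 p)), one_mul]
    have hC1 : ∀ p : Fin (m + 1),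
        ((∏ i ∈ Finset.Iio p, (x p - x i) / (1 - x i * x p)) *
          ∏ j ∈ Finset.Ioi p, (x j - x p) / (1 - x p * x j))⁻¹ * (-1 : F) ^ (p : ℕ) =
        ∏ j ∈ Finset.univ.erase p, ((1 - x j * x p) / (x j - x p)) := by
      intro p
      have hdisj : Disjoint (Finset.Iio p) (Finset.Ioi p) :=
        Finset.disjoint_left.mpr fun a ha ha' =>
          absurd (Finset.mem_Iio.mp ha) (not_lt_of_gt (Finset.mem_Ioi.mp ha'))
      rw [erase_eq_Iio_union_Ioi, Finset.prod_union hdisj, mul_inv]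
      have hw1 : (∏ j ∈ Finset.Iio p, ((1 - x j * x p) / (x j - x p))) =
          (-1 : F) ^ (p : ℕ) * (∏ i ∈ Finset.Iio p, (x p - x i) / (1 - x i * x p))⁻¹ := by
        rw [← Finset.prod_inv_distrib]
        calc (∏ j ∈ Finset.Iio p, ((1 - x j * x p) / (x j - x p)))
            = ∏ j ∈ Finset.Iio p, ((-1 : F) * ((x p - x j) / (1 - x j * x p))⁻¹) := by
              refine Finset.prod_congr rfl fun j hj => ?_
              have ha : x j - x p ≠ 0 :=
                sub_ne_zero_of_ne (hd j p (ne_of_lt (Finset.mem_Iio.mp hj)))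
              have hb : x p - x j ≠ 0 :=
                sub_ne_zero_of_ne (hd p j (ne_of_gt (Finset.mem_Iio.mp hj)))
              rw [inv_div]
              field_simp
              ring
          _ = (-1 : F) ^ (p : ℕ) * ∏ j ∈ Finset.Iio p, ((x p - x j) / (1 - x j * x p))⁻¹ := by
              rw [Finset.prod_mul_distrib, Finset.prod_const, Fin.card_Iio]
      have hw2 : (∏ j ∈ Finset.Ioi p, ((1 - x j * x p) / (x j - x p))) =
          (∏ j ∈ Finset.Ioi p, (x j - x p) / (1 - x p * x j))⁻¹ := by
        rw [← Finset.prod_inv_distrib]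
        refine Finset.prod_congr rfl fun j hj => ?_
        rw [inv_div, mul_comm (x p) (x j)]
      rw [hw1, hw2]
      ring
    -- assemble
    simp only [rhsProd]
    have hterm : ∀ p : Fin (m + 1), (-1 : F) ^ (p : ℕ) *
        ((∏ i : Fin m, x (p.succAbove i)) * ((∏ i : Fin m, (1 - x (p.succAbove i))⁻¹) *
          ∏ i : Fin m, ∏ j ∈ Finset.Ioi i, (x (p.succAbove j) - x (p.succAbove i)) /
            (1 - x (p.succAbove i) * x (p.succAbove j)))) =
        ((∏ i : Fin (m + 1), (1 - x i)⁻¹) *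
            ∏ i : Fin (m + 1), ∏ j ∈ Finset.Ioi i, (x j - x i) / (1 - x i * x j)) *
          ((1 - x p) * (∏ j ∈ Finset.univ.erase p, x j) *
            ∏ j ∈ Finset.univ.erase p, ((1 - x j * x p) / (x j - x p))) := by
      intro p
      rw [hEp p, hPisub p, hGp p, ← hC1 p]
      ring
    rw [Finset.sum_congr rfl (fun p _ => hterm p), ← Finset.mul_sum, key x h0 hp1 hd, ← hEdef]
    rw [mul_comm _ ((1 : F) - E), ← mul_assoc, inv_mul_cancel₀ hE, one_mul]

end LW



/-- **Littlewood identity, Zeilberger's Subsublemma 1.1.3.** In the field of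
rational functions in `X_1,…,X_n` (`n ≥ 1`),
`ASym[ ∏_i X_i^{i-1} (1 - ∏_{j≥i} X_j)^{-1} ]
  = ∏_i (1 - X_i)^{-1} · ∏_{i<j} (X_j - X_i)/(1 - X_i X_j)`,
where `ASym f = Σ_{σ} sgn(σ) f(X_{σ(1)},…,X_{σ(n)})`. -/
theorem littlewood_antisymmetrization (n : ℕ) (hn : 1 ≤ n) :
    letI K := FractionRing (MvPolynomial (Fin n) ℚ)
    letI Y : Fin n → K := fun i => algebraMap (MvPolynomial (Fin n) ℚ) K (MvPolynomial.X i)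
    ∑ σ : Equiv.Perm (Fin n), ((Equiv.Perm.sign σ : ℤ) : K) *
        ∏ i : Fin n, (Y (σ i)) ^ (i : ℕ) * (1 - ∏ j ∈ Finset.Ici i, Y (σ j))⁻¹
      = (∏ i : Fin n, (1 - Y i)⁻¹) *
          ∏ i : Fin n, ∏ j ∈ Finset.Ioi i, (Y j - Y i) / (1 - Y i * Y j) := by
  have hinj : Function.Injective (algebraMap (MvPolynomial (Fin n) ℚ)
      (FractionRing (MvPolynomial (Fin n) ℚ))) := IsFractionRing.injective _ _
  have hcc : ∀ q : MvPolynomial (Fin n) ℚ, MvPolynomial.constantCoeff q ≠ 0 → q ≠ 0 :=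
    fun q h hq => h (by rw [hq, map_zero])
  have halg : ∀ q : MvPolynomial (Fin n) ℚ, q ≠ 0 →
      algebraMap (MvPolynomial (Fin n) ℚ) (FractionRing (MvPolynomial (Fin n) ℚ)) q ≠ 0 :=
    fun q hq => by rw [map_ne_zero_iff _ hinj]; exact hq
  refine LW.general n (fun i => algebraMap _ _ (MvPolynomial.X i : MvPolynomial (Fin n) ℚ)) ?_ ?_ ?_ ?_ ?_ ?_
  · intro i
    exact halg _ (MvPolynomial.X_ne_zero i)
  · intro i j hij
    exact hinj.ne (MvPolynomial.X_injective.ne hij)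
  · intro i
    have e : (1 : FractionRing (MvPolynomial (Fin n) ℚ)) - algebraMap _ _ (MvPolynomial.X i : MvPolynomial (Fin n) ℚ) =
        algebraMap (MvPolynomial (Fin n) ℚ) _ (1 - MvPolynomial.X i) := by
      rw [map_sub, map_one]
    rw [e]
    exact halg _ (hcc _ (by simp))
  · intro i
    have e : (1 : FractionRing (MvPolynomial (Fin n) ℚ)) + algebraMap _ _ (MvPolynomial.X i : MvPolynomial (Fin n) ℚ) =
        algebraMap (MvPolynomial (Fin n) ℚ) _ (1 + MvPolynomial.X i) := by
      rw [map_add, map_one]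
    rw [e]
    exact halg _ (hcc _ (by simp))
  · intro i j
    have e : (1 : FractionRing (MvPolynomial (Fin n) ℚ)) -
        algebraMap _ _ (MvPolynomial.X i : MvPolynomial (Fin n) ℚ) * algebraMap _ _ (MvPolynomial.X j : MvPolynomial (Fin n) ℚ) =
        algebraMap (MvPolynomial (Fin n) ℚ) _ (1 - MvPolynomial.X i * MvPolynomial.X j) := by
      rw [map_sub, map_one, map_mul]
    rw [e]
    exact halg _ (hcc _ (by simp))
  · intro s hne
    obtain ⟨j, hj⟩ := hne
    have e : (1 : FractionRing (MvPolynomial (Fin n) ℚ)) -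
        ∏ k ∈ s, algebraMap _ _ (MvPolynomial.X k : MvPolynomial (Fin n) ℚ) =
        algebraMap (MvPolynomial (Fin n) ℚ) _ (1 - ∏ k ∈ s, MvPolynomial.X k) := by
      rw [map_sub, map_one, map_prod]
    rw [e]
    refine halg _ (hcc _ ?_)
    rw [map_sub, map_one, map_prod, Finset.prod_eq_zero hj (by simp)]
    simp
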